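/- For C > 0, τ > 0, σ > 1, p ≥ 1 an integer, and λ ≥ 1: C^{p^{σ−1}} p^{τ p^{σ−1}} ≤ λ if and only if p ≤ C^{−1/τ} · exp( W(C^{(σ−1)/τ} · ((σ−1)/τ) · ln λ) / (σ−1) ), where W is the principal branch of the Lambert W function. -/

import Mathlib

private lemma key_xexp (u w : ℝ) (hw : 0 ≤ w) :
    u * Real.exp u ≤ w * Real.exp w ↔ u ≤ w := by
  constructor
  · intro h
    by_contra hlt
    push_neg at hlt
    have hu : 0 < u := lt_of_le_of_lt hw hlt
    have h1 : Real.exp w < Real.exp u := Real.exp_lt_exp.mpr hlt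
    have h2 : 0 < Real.exp u := Real.exp_pos u
    have h3 : 0 < Real.exp w := Real.exp_pos w
    nlinarith
  · intro h
    rcases le_or_gt u 0 with hu | hu
    · have h1 : u * Real.exp u ≤ 0 :=
        mul_nonpos_of_nonpos_of_nonneg hu (Real.exp_pos u).le
      have h2 : 0 ≤ w * Real.exp w := mul_nonneg hw (Real.exp_pos w).le
      linarith
    · have h1 : Real.exp u ≤ Real.exp w := Real.exp_le_exp.mpr h
      nlinarith [Real.exp_pos u, Real.exp_pos w]

/-- For C, τ > 0, σ > 1, p ≥ 1 and λ ≥ 1: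
    C^{p^{σ−1}} p^{τ p^{σ−1}} ≤ λ ↔ p ≤ C^{−1/τ}·exp(W(C^{(σ−1)/τ}·((σ−1)/τ)·ln λ)/(σ−1)). -/
theorem stmt_15 (W : ℝ → ℝ)
    (hW : ∀ y : ℝ, 0 ≤ y → 0 ≤ W y ∧ W y * Real.exp (W y) = y)
    (C τ σ : ℝ) (hC : 0 < C) (hτ : 0 < τ) (hσ : 1 < σ) :
    ∀ p : ℕ, 1 ≤ p → ∀ lam : ℝ, 1 ≤ lam →
      (C ^ ((p : ℝ) ^ (σ - 1)) * (p : ℝ) ^ (τ * (p : ℝ) ^ (σ - 1)) ≤ lam ↔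
        (p : ℝ) ≤ C ^ (-(1 : ℝ) / τ) *
          Real.exp (W (C ^ ((σ - 1) / τ) * ((σ - 1) / τ) * Real.log lam) / (σ - 1))) := by
  intro p hp lam hlam
  have hσ1 : 0 < σ - 1 := by linarith
  have hn : (1 : ℝ) ≤ (p : ℝ) := by exact_mod_cast hp
  have hn0 : (0 : ℝ) < (p : ℝ) := by linarith
  have hlam0 : (0 : ℝ) < lam := by linarith
  have hloglam : 0 ≤ Real.log lam := Real.log_nonneg hlam
  set y : ℝ := C ^ ((σ - 1) / τ) * ((σ - 1) / τ) * Real.log lam with hy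
  have hy0 : 0 ≤ y :=
    mul_nonneg (mul_nonneg (Real.rpow_nonneg hC.le _) (by positivity)) hloglam
  obtain ⟨hw0, hwy⟩ := hW y hy0
  set w : ℝ := W y with hwdef
  set u : ℝ := (σ - 1) * (Real.log p + Real.log C / τ) with hu
  have hK : (0 : ℝ) < (σ - 1) / τ * C ^ ((σ - 1) / τ) := by positivity
  have hexpu : Real.exp u = (p : ℝ) ^ (σ - 1) * C ^ ((σ - 1) / τ) := by
    have huu : u = Real.log (p : ℝ) * (σ - 1) + Real.log C * ((σ - 1) / τ) := by
      rw [hu]; field_simp; try ring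
    rw [huu, Real.exp_add, ← Real.rpow_def_of_pos hn0, ← Real.rpow_def_of_pos hC]
  have hA : (0 : ℝ) < (p : ℝ) ^ (σ - 1) := Real.rpow_pos_of_pos hn0 _
  have hL : (0 : ℝ) < C ^ ((p : ℝ) ^ (σ - 1)) * (p : ℝ) ^ (τ * (p : ℝ) ^ (σ - 1)) := by
    positivity
  have hlogL : Real.log (C ^ ((p : ℝ) ^ (σ - 1)) * (p : ℝ) ^ (τ * (p : ℝ) ^ (σ - 1)))
      = (p : ℝ) ^ (σ - 1) * Real.log C + τ * (p : ℝ) ^ (σ - 1) * Real.log p := by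
    rw [Real.log_mul (by positivity) (by positivity), Real.log_rpow hC, Real.log_rpow hn0]
    try ring
  have step1 : C ^ ((p : ℝ) ^ (σ - 1)) * (p : ℝ) ^ (τ * (p : ℝ) ^ (σ - 1)) ≤ lam ↔
      u * Real.exp u ≤ y := by
    rw [← Real.log_le_log_iff hL hlam0, hlogL]
    have e1 : u * Real.exp u = ((σ - 1) / τ * C ^ ((σ - 1) / τ)) *
        ((p : ℝ) ^ (σ - 1) * Real.log C + τ * (p : ℝ) ^ (σ - 1) * Real.log p) := by
      rw [hexpu, hu]
      field_simp
      try ring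
    have e2 : y = ((σ - 1) / τ * C ^ ((σ - 1) / τ)) * Real.log lam := by
      rw [hy]; ring
    rw [e1, e2, mul_le_mul_iff_right₀ hK]
  have step2 : u * Real.exp u ≤ y ↔ u ≤ w := by
    rw [← hwy]; exact key_xexp u w hw0
  have hR : (0 : ℝ) < C ^ (-(1 : ℝ) / τ) * Real.exp (w / (σ - 1)) := by positivity
  have step3 : (p : ℝ) ≤ C ^ (-(1 : ℝ) / τ) * Real.exp (w / (σ - 1)) ↔ u ≤ w := by
    rw [← Real.log_le_log_iff hn0 hR, Real.log_mul (by positivity) (Real.exp_pos _).ne',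
      Real.log_rpow hC, Real.log_exp]
    rw [show -(1 : ℝ) / τ * Real.log C + w / (σ - 1)
        = w / (σ - 1) - Real.log C / τ by ring]
    rw [le_sub_iff_add_le, le_div_iff₀ hσ1, hu]
    constructor <;> intro h <;> linarith [h]
  exact step1.trans (step2.trans step3.symm)
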